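/- arXiv:1309.7441 — 2 statements merged into one kernel-verified Lean document; each statement's English description precedes it below -/
import Mathlib

section
/- For every z ∈ ℝ one has the implicit representation |z| = ∫_{V(z)}^θ ds/√(F(s)), and equivalently |z| = −(1/λ)·ln(V(z)/θ) + ∫_{V(z)}^θ (1/√(F(s)) − 1/(λ s)) ds, all the integrals involved being finite. -/
open Set Filter MeasureTheory

noncomputable def Fint (f : ℝ → ℝ) (u : ℝ) : ℝ := -2 * ∫ s in (0:ℝ)..u, f s

structure CondF (f : ℝ → ℝ) (α θ lam : ℝ) : Prop where
  smooth : ContDiff ℝ 1 f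
  f_zero : f 0 = 0
  df_zero : deriv f 0 < 0
  lam_def : lam = Real.sqrt (-(deriv f 0))
  alpha_pos : 0 < α
  alpha_lt : α < 1
  neg_low : ∀ s ∈ Set.Ioo (0:ℝ) α, f s < 0
  pos_mid : ∀ s ∈ Set.Ioo α (1:ℝ), 0 < f s
  neg_high : ∀ s ∈ Set.Ioi (1:ℝ), f s < 0
  df_bdd : BddBelow (deriv f '' Set.Ioi (1:ℝ))
  theta_gt : α < θ
  theta_lt : θ < 1
  F_theta : Fint f θ = 0

structure IsGround (f : ℝ → ℝ) (θ : ℝ) (V : ℝ → ℝ) : Prop where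
  smooth : ContDiff ℝ 2 V
  pos : ∀ z, 0 < V z
  ode : ∀ z, deriv (deriv V) z + f (V z) = 0
  at_zero : V 0 = θ
  even : ∀ z, V (-z) = V z
  lim_top : Filter.Tendsto V Filter.atTop (nhds 0)
  lim_bot : Filter.Tendsto V Filter.atBot (nhds 0)
  first_int : ∀ z, (deriv V z) ^ 2 = Fint f (V z)
  dec : ∀ z > (0:ℝ), deriv V z < 0

lemma Fint_cont {f : ℝ → ℝ} (hc : Continuous f) : Continuous (Fint f) :=
  continuous_const.mul (intervalIntegral.continuous_primitive
    (fun a b => hc.intervalIntegrable a b) 0)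

lemma Fint_eq {f : ℝ → ℝ} {α θ lam : ℝ} (hf : CondF f α θ lam) (u : ℝ) :
    Fint f u = 2 * ∫ s in u..θ, f s := by
  have hc := hf.smooth.continuous
  have h0 : ∫ s in (0:ℝ)..θ, f s = 0 := by
    have := hf.F_theta; unfold Fint at this; linarith
  have hadd : (∫ s in (0:ℝ)..u, f s) + ∫ s in u..θ, f s = ∫ s in (0:ℝ)..θ, f s :=
    intervalIntegral.integral_add_adjacent_intervals (hc.intervalIntegrable _ _)
      (hc.intervalIntegrable _ _)
  unfold Fint; rw [h0] at hadd; linarith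

lemma Fint_pos {f : ℝ → ℝ} {α θ lam : ℝ} (hf : CondF f α θ lam) {u : ℝ}
    (hu : u ∈ Ioo 0 θ) : 0 < Fint f u := by
  have hc := hf.smooth.continuous
  rcases le_or_gt u α with h | h
  · have hpos : 0 < ∫ s in (0:ℝ)..u, -f s :=
      intervalIntegral.intervalIntegral_pos_of_pos_on
        ((hc.neg).intervalIntegrable _ _)
        (fun x hx => by have := hf.neg_low x ⟨hx.1, lt_of_lt_of_le hx.2 h⟩; linarith) hu.1
    have hneg : ∫ s in (0:ℝ)..u, -f s = -∫ s in (0:ℝ)..u, f s :=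
      intervalIntegral.integral_neg
    unfold Fint; linarith
  · rw [Fint_eq hf]
    have hpos : 0 < ∫ s in u..θ, f s :=
      intervalIntegral.intervalIntegral_pos_of_pos_on (hc.intervalIntegrable _ _)
        (fun x hx => hf.pos_mid x ⟨lt_trans h hx.1, lt_trans hx.2 hf.theta_lt⟩) hu.2
    linarith

lemma g_integrable {F : ℝ → ℝ} {θ m c : ℝ} (hFc : Continuous F)
    (hFpos : ∀ u ∈ Set.Ioo (0:ℝ) θ, 0 < F u)
    (hmθ : m < θ) (hc : 0 < c)
    (hFlb : ∀ s ∈ Set.Icc m θ, 2*c*(θ-s) ≤ F s) (hFθ : F θ = 0)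
    {a : ℝ} (ha : 0 < a) (haθ : a ≤ θ) :
    IntervalIntegrable (fun s => 1 / Real.sqrt (F s)) MeasureTheory.volume a θ := by
  rcases eq_or_lt_of_le haθ with rfl | haθ
  · exact IntervalIntegrable.refl
  set b := max a m with hb
  have hab : a ≤ b := le_max_left _ _
  have hmb : m ≤ b := le_max_right _ _
  have hbθ : b < θ := max_lt haθ hmθ
  have hgcont : ContinuousOn (fun s => 1 / Real.sqrt (F s)) {s | 0 < F s} := by
    apply ContinuousOn.div continuousOn_const
      ((Real.continuous_sqrt.comp hFc).continuousOn)
    intro x hx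
    exact ne_of_gt (Real.sqrt_pos.mpr hx)
  have piece1 : IntervalIntegrable (fun s => 1 / Real.sqrt (F s)) MeasureTheory.volume a b := by
    apply ContinuousOn.intervalIntegrable
    apply hgcont.mono
    rw [Set.uIcc_of_le hab]
    intro s hs
    exact hFpos s ⟨lt_of_lt_of_le ha hs.1, lt_of_le_of_lt hs.2 hbθ⟩
  have hdom : IntervalIntegrable
      (fun s => (Real.sqrt (2*c))⁻¹ * (θ - s) ^ (-(1:ℝ)/2)) MeasureTheory.volume b θ := by
    have h1 : IntervalIntegrable (fun x : ℝ => x ^ (-(1:ℝ)/2)) MeasureTheory.volume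
        (θ - b) (θ - θ) := intervalIntegral.intervalIntegrable_rpow' (by norm_num)
    have h2 := h1.comp_sub_left θ
    simp only [sub_sub_cancel, sub_self, sub_zero] at h2
    exact h2.const_mul _
  have hmeas : AEStronglyMeasurable (fun s => 1 / Real.sqrt (F s))
      (MeasureTheory.volume.restrict (Set.uIoc b θ)) :=
    (measurable_const.div (Real.continuous_sqrt.comp hFc).measurable).aestronglyMeasurable
  have hle : ∀ s ∈ Set.uIoc b θ, ‖1 / Real.sqrt (F s)‖ ≤
      ‖(Real.sqrt (2*c))⁻¹ * (θ - s) ^ (-(1:ℝ)/2)‖ := by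
    intro s hs
    rw [Set.uIoc_of_le hbθ.le] at hs
    rcases eq_or_lt_of_le hs.2 with rfl | hsθ
    · simp [hFθ]
    · have hsm : m ≤ s := le_trans hmb hs.1.le
      have hFs : 2*c*(θ-s) ≤ F s := hFlb s ⟨hsm, hs.2⟩
      have hpos : 0 < 2*c*(θ-s) := by nlinarith
      have h01 : Real.sqrt (2*c*(θ-s)) ≤ Real.sqrt (F s) := Real.sqrt_le_sqrt hFs
      have h02 : 0 < Real.sqrt (2*c*(θ-s)) := Real.sqrt_pos.mpr hpos
      have key : 1 / Real.sqrt (F s) ≤ 1 / Real.sqrt (2*c*(θ-s)) :=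
        one_div_le_one_div_of_le h02 h01
      have hrw : Real.sqrt (2*c*(θ-s)) = Real.sqrt (2*c) * Real.sqrt (θ-s) :=
        Real.sqrt_mul (by linarith) _
      have hrpow : (θ - s) ^ (-(1:ℝ)/2) = (Real.sqrt (θ-s))⁻¹ := by
        rw [Real.sqrt_eq_rpow, ← Real.rpow_neg (by linarith : (0:ℝ) ≤ θ - s)]
        norm_num
      rw [Real.norm_of_nonneg (by positivity), Real.norm_of_nonneg (mul_nonneg
        (inv_nonneg.mpr (Real.sqrt_nonneg _)) (Real.rpow_nonneg (by linarith) _))]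
      rw [hrpow]
      calc 1 / Real.sqrt (F s) ≤ 1 / Real.sqrt (2*c*(θ-s)) := key
        _ = (Real.sqrt (2*c))⁻¹ * (Real.sqrt (θ-s))⁻¹ := by
            rw [hrw]; rw [one_div, mul_inv]
  have piece2 : IntervalIntegrable (fun s => 1 / Real.sqrt (F s)) MeasureTheory.volume b θ := by
    apply hdom.mono_fun hmeas
    exact (MeasureTheory.ae_restrict_iff' measurableSet_uIoc).mpr (Filter.Eventually.of_forall hle)
  exact piece1.trans piece2

lemma ground_strictAnti {f V : ℝ → ℝ} {θ : ℝ} (hV : IsGround f θ V) :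
    StrictAntiOn V (Ici 0) := by
  apply strictAntiOn_of_deriv_neg (convex_Ici 0) hV.smooth.continuous.continuousOn
  intro x hx
  rw [interior_Ici] at hx
  exact hV.dec x hx

lemma ground_le {f V : ℝ → ℝ} {θ : ℝ} (hV : IsGround f θ V) (x : ℝ) : V x ≤ θ := by
  have h := (ground_strictAnti hV).antitoneOn self_mem_Ici
    (mem_Ici.mpr (abs_nonneg x)) (abs_nonneg x)
  rw [hV.at_zero] at h
  rcases abs_cases x with ⟨h1, _⟩ | ⟨h1, _⟩
  · rwa [h1] at h
  · rw [h1, hV.even] at h; exact h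

lemma integral_eq_of_pos {f V : ℝ → ℝ} {θ : ℝ} (hV : IsGround f θ V)
    (hFpos : ∀ u ∈ Set.Ioo (0:ℝ) θ, 0 < Fint f u)
    (hFc : Continuous (Fint f))
    (hIntz : ∀ {a : ℝ}, 0 < a → a ≤ θ →
      IntervalIntegrable (fun s => 1 / Real.sqrt (Fint f s)) MeasureTheory.volume a θ)
    {z : ℝ} (hz : 0 < z) :
    ∫ s in (V z)..θ, 1 / Real.sqrt (Fint f s) = z := by
  have hVc : Continuous V := hV.smooth.continuous
  have hanti : StrictAntiOn V (Ici 0) := ground_strictAnti hV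
  have hVlt : ∀ x > (0:ℝ), V x < θ := by
    intro x hx
    have := hanti self_mem_Ici (mem_Ici.mpr hx.le) hx
    rwa [hV.at_zero] at this
  have hVmono : ∀ {x y : ℝ}, 0 < x → x ≤ y → V y ≤ V x := by
    intro x y hx hxy
    exact hanti.antitoneOn (mem_Ici.mpr hx.le) (mem_Ici.mpr (le_trans hx.le hxy)) hxy
  have hderiv : ∀ x > (0:ℝ), deriv V x = - Real.sqrt (Fint f (V x)) := by
    intro x hx
    have h1 : Real.sqrt ((deriv V x)^2) = |deriv V x| := Real.sqrt_sq_eq_abs _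
    rw [hV.first_int x, abs_of_neg (hV.dec x hx)] at h1
    linarith
  set g : ℝ → ℝ := fun s => 1 / Real.sqrt (Fint f s) with hg
  have hgcont : ContinuousOn g {s | 0 < Fint f s} := by
    apply ContinuousOn.div continuousOn_const ((Real.continuous_sqrt.comp hFc).continuousOn)
    intro x hx
    exact ne_of_gt (Real.sqrt_pos.mpr hx)
  have key : ∀ ε ∈ Ioc (0:ℝ) z, ∫ s in (V z)..(V ε), g s = z - ε := by
    intro ε hε
    have himg : V '' (uIcc ε z) ⊆ {s | 0 < Fint f s} := by
      rintro _ ⟨x, hx, rfl⟩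
      rw [uIcc_of_le hε.2] at hx
      have hx0 : 0 < x := lt_of_lt_of_le hε.1 hx.1
      exact hFpos _ ⟨hV.pos x, hVlt x hx0⟩
    have hsub := intervalIntegral.integral_comp_smul_deriv'
      (f := V) (f' := deriv V) (g := g) (a := ε) (b := z)
      (fun x _ => ((hV.smooth.differentiable (by norm_num)) x).hasDerivAt)
      ((hV.smooth.continuous_deriv (by norm_num)).continuousOn)
      (hgcont.mono himg)
    have hEq : EqOn (fun x => deriv V x • (g ∘ V) x) (fun _ => (-1:ℝ)) (uIcc ε z) := by
      intro x hx
      rw [uIcc_of_le hε.2] at hx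
      have hx0 : 0 < x := lt_of_lt_of_le hε.1 hx.1
      have hF := hFpos _ ⟨hV.pos x, hVlt x hx0⟩
      have hs : Real.sqrt (Fint f (V x)) ≠ 0 := ne_of_gt (Real.sqrt_pos.mpr hF)
      simp only [hg, Function.comp, smul_eq_mul, hderiv x hx0]
      field_simp
    rw [intervalIntegral.integral_congr hEq, intervalIntegral.integral_const] at hsub
    rw [intervalIntegral.integral_symm, ← hsub]
    simp
  have hVz_pos := hV.pos z
  have hVzθ := hVlt z hz
  have hIg := hIntz hVz_pos hVzθ.le
  set P : ℝ → ℝ := fun x => ∫ s in (V z)..x, g s with hP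
  have hPcont : ContinuousOn P (uIcc (V z) θ) := by
    apply intervalIntegral.continuousOn_primitive_interval
    rw [uIcc_of_le hVzθ.le]
    exact (intervalIntegrable_iff_integrableOn_Icc_of_le hVzθ.le).mp hIg
  have hPatθ : ContinuousWithinAt P (uIcc (V z) θ) θ :=
    hPcont θ (by rw [uIcc_of_le hVzθ.le]; exact right_mem_Icc.mpr hVzθ.le)
  have hVtend : Tendsto V (nhdsWithin (0:ℝ) (Ioi 0)) (nhdsWithin θ (uIcc (V z) θ)) := by
    rw [tendsto_nhdsWithin_iff]
    constructor
    · have hc0 : Tendsto V (nhds 0) (nhds θ) := by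
        have := hVc.continuousAt (x := (0:ℝ))
        rwa [ContinuousAt, hV.at_zero] at this
      exact hc0.mono_left nhdsWithin_le_nhds
    · filter_upwards [Ioc_mem_nhdsGT_of_mem (Set.left_mem_Ico.mpr hz)] with ε hε
      rw [uIcc_of_le hVzθ.le]
      exact ⟨hVmono hε.1 hε.2, (hVlt ε hε.1).le⟩
  have h1 : Tendsto (fun ε => P (V ε)) (nhdsWithin (0:ℝ) (Ioi 0)) (nhds (P θ)) :=
    hPatθ.tendsto.comp hVtend
  have h2 : Tendsto (fun ε => P (V ε)) (nhdsWithin (0:ℝ) (Ioi 0)) (nhds z) := by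
    have heq : (fun ε => P (V ε)) =ᶠ[nhdsWithin (0:ℝ) (Ioi 0)] (fun ε => z - ε) := by
      filter_upwards [Ioc_mem_nhdsGT_of_mem (Set.left_mem_Ico.mpr hz)] with ε hε
      exact key ε hε
    rw [Filter.tendsto_congr' heq]
    have : Tendsto (fun ε : ℝ => z - ε) (nhds 0) (nhds (z - 0)) :=
      tendsto_const_nhds.sub tendsto_id
    simpa using this.mono_left nhdsWithin_le_nhds
  exact tendsto_nhds_unique h1 h2

theorem stmt1 (f V : ℝ → ℝ) (α θ lam : ℝ) (hf : CondF f α θ lam)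
    (hV : IsGround f θ V) :
    ∀ z : ℝ,
      IntervalIntegrable (fun s => 1 / Real.sqrt (Fint f s)) MeasureTheory.volume (V z) θ ∧
      IntervalIntegrable (fun s => 1 / Real.sqrt (Fint f s) - 1 / (lam * s))
        MeasureTheory.volume (V z) θ ∧
      |z| = ∫ s in (V z)..θ, 1 / Real.sqrt (Fint f s) ∧
      |z| = -(1 / lam) * Real.log (V z / θ) +
        ∫ s in (V z)..θ, (1 / Real.sqrt (Fint f s) - 1 / (lam * s)) := by
  intro z
  have hθpos : 0 < θ := lt_trans hf.alpha_pos hf.theta_gt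
  have hFc : Continuous (Fint f) := Fint_cont hf.smooth.continuous
  have hFpos : ∀ u ∈ Ioo (0:ℝ) θ, 0 < Fint f u := fun u hu => Fint_pos hf hu
  set m := (α + θ)/2 with hm
  have hmα : α < m := by rw [hm]; linarith [hf.theta_gt]
  have hmθ : m < θ := by rw [hm]; linarith [hf.theta_gt]
  obtain ⟨x₀, hx₀mem, hmin⟩ := isCompact_Icc.exists_isMinOn
    (Set.nonempty_Icc.mpr hmθ.le) hf.smooth.continuous.continuousOn
  have hc : 0 < f x₀ := hf.pos_mid x₀
    ⟨lt_of_lt_of_le hmα hx₀mem.1, lt_of_le_of_lt hx₀mem.2 hf.theta_lt⟩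
  have hFlb : ∀ s ∈ Icc m θ, 2*(f x₀)*(θ-s) ≤ Fint f s := by
    intro s hs
    rw [Fint_eq hf]
    have hle : ∫ x in s..θ, f x₀ ≤ ∫ x in s..θ, f x :=
      intervalIntegral.integral_mono_on hs.2 intervalIntegrable_const
        (hf.smooth.continuous.intervalIntegrable _ _)
        (fun x hx => hmin ⟨le_trans hs.1 hx.1, hx.2⟩)
    rw [intervalIntegral.integral_const, smul_eq_mul] at hle
    nlinarith
  have hIntz : ∀ {a : ℝ}, 0 < a → a ≤ θ →
      IntervalIntegrable (fun s => 1 / Real.sqrt (Fint f s)) MeasureTheory.volume a θ :=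
    fun ha haθ => g_integrable hFc hFpos hmθ hc hFlb hf.F_theta ha haθ
  have hlam : 0 < lam := by
    rw [hf.lam_def]; exact Real.sqrt_pos.mpr (by linarith [hf.df_zero])
  have hVzpos : 0 < V z := hV.pos z
  have hVzθ : V z ≤ θ := ground_le hV z
  have integ1 : IntervalIntegrable (fun s => 1 / Real.sqrt (Fint f s))
      MeasureTheory.volume (V z) θ := hIntz hVzpos hVzθ
  have hspos : ∀ s ∈ uIcc (V z) θ, 0 < s := by
    intro s hs
    rw [uIcc_of_le hVzθ] at hs
    exact lt_of_lt_of_le hVzpos hs.1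
  have hInth : IntervalIntegrable (fun s => 1 / (lam * s)) MeasureTheory.volume (V z) θ := by
    apply ContinuousOn.intervalIntegrable
    apply ContinuousOn.div continuousOn_const
      (continuous_const.mul continuous_id).continuousOn
    intro x hx
    exact mul_ne_zero (ne_of_gt hlam) (ne_of_gt (hspos x hx))
  have integ2 : IntervalIntegrable (fun s => 1 / Real.sqrt (Fint f s) - 1 / (lam * s))
      MeasureTheory.volume (V z) θ := integ1.sub hInth
  have hInth_eq : ∫ s in (V z)..θ, 1 / (lam * s) = lam⁻¹ * Real.log (θ / V z) := by
    have h0 : (0:ℝ) ∉ uIcc (V z) θ := fun h => lt_irrefl 0 (hspos 0 h)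
    have hrw : ∀ s : ℝ, 1 / (lam * s) = lam⁻¹ * (1 / s) := by
      intro s; rw [one_div, mul_inv, one_div]
    simp_rw [hrw]
    rw [intervalIntegral.integral_const_mul, integral_one_div h0]
  have hlog : Real.log (V z / θ) = - Real.log (θ / V z) := by
    rw [Real.log_div (ne_of_gt hVzpos) (ne_of_gt hθpos),
      Real.log_div (ne_of_gt hθpos) (ne_of_gt hVzpos)]
    ring
  rcases eq_or_ne z 0 with rfl | hzne
  · refine ⟨integ1, integ2, ?_, ?_⟩
    · rw [hV.at_zero, intervalIntegral.integral_same]; simp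
    · rw [hV.at_zero, intervalIntegral.integral_same, div_self (ne_of_gt hθpos), Real.log_one]
      simp
  · have habs : 0 < |z| := abs_pos.mpr hzne
    have hVzabs : V z = V |z| := by
      rcases abs_cases z with ⟨h1, _⟩ | ⟨h1, _⟩
      · rw [h1]
      · rw [h1, hV.even]
    have eq1 : |z| = ∫ s in (V z)..θ, 1 / Real.sqrt (Fint f s) := by
      rw [hVzabs]
      exact (integral_eq_of_pos hV hFpos hFc (fun ha haθ => hIntz ha haθ) habs).symm
    refine ⟨integ1, integ2, eq1, ?_⟩
    rw [intervalIntegral.integral_sub integ1 hInth, ← eq1, hInth_eq, hlog]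
    field_simp
    ring
end

section
/- There exists exactly one function v ∈ C²([0,∞)) such that v''(x) + f(v(x)) = 0 for all x ≥ 0, v(0) = 0, v' > 0 on [0,∞), and v(x) → 1 as x → ∞; this function v_* satisfies v_*'(x)² = F(v_*(x)) − F(1) for all x ≥ 0 (with F(1) < 0). Moreover, for every b ≥ 0 the set Z_active(b) := { z ≤ 0 : v_*(−z) = b·v_*'(−z) } is nonempty. -/
open Set Filter MeasureTheory

noncomputable def Gf (f : ℝ → ℝ) (u : ℝ) : ℝ := Fint f u - Fint f 1

set_option linter.unusedSectionVars false
section basics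
variable {f : ℝ → ℝ} {α θ lam : ℝ} (hf : CondF f α θ lam)
include hf

lemma fcont : Continuous f := hf.smooth.continuous

lemma fint_integrable (a b : ℝ) : IntervalIntegrable f volume a b :=
  (fcont hf).intervalIntegrable a b

lemma hasDerivAt_Fint (u : ℝ) : HasDerivAt (Fint f) (-2 * f u) u := by
  have h : HasDerivAt (fun u => ∫ s in (0:ℝ)..u, f s) (f u) u :=
    intervalIntegral.integral_hasDerivAt_right (fint_integrable hf 0 u)
      ((fcont hf).stronglyMeasurableAtFilter _ _) (fcont hf).continuousAt
  have e : Fint f = fun u => -2 * ∫ s in (0:ℝ)..u, f s := rfl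
  rw [e]
  simpa only [neg_mul] using h.const_mul (-2 : ℝ)

lemma contDiff_Fint : ContDiff ℝ 2 (Fint f) := by
  rw [show (2 : WithTop ℕ∞) = 1 + 1 by norm_num, contDiff_succ_iff_deriv]
  refine ⟨fun u => (hasDerivAt_Fint hf u).differentiableAt, ?_, ?_⟩
  · simp
  · have : deriv (Fint f) = fun u => -2 * f u := by
      ext u; exact (hasDerivAt_Fint hf u).deriv
    rw [this]
    exact (contDiff_const.mul hf.smooth)

lemma Fint_one_neg : Fint f 1 < 0 := by
  have hsplit : ∫ s in (0:ℝ)..1, f s = (∫ s in (0:ℝ)..θ, f s) + ∫ s in θ..1, f s :=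
    (intervalIntegral.integral_add_adjacent_intervals (fint_integrable hf 0 θ)
      (fint_integrable hf θ 1)).symm
  have hpos : 0 < ∫ s in θ..1, f s := by
    apply intervalIntegral.intervalIntegral_pos_of_pos_on (fint_integrable hf θ 1)
    · intro x hx
      exact hf.pos_mid x ⟨lt_of_lt_of_le hf.theta_gt hx.1.le, hx.2⟩
    · exact hf.theta_lt
  have hθ : -2 * ∫ s in (0:ℝ)..θ, f s = 0 := hf.F_theta
  simp only [Fint, hsplit]
  nlinarith [hθ]

lemma f_one : f 1 = 0 := by
  have h1 : f 1 ≤ 0 := by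
    have ht : Tendsto f (nhdsWithin 1 (Ioi 1)) (nhds (f 1)) :=
      ((fcont hf).continuousAt).continuousWithinAt.tendsto
    refine le_of_tendsto ht ?_
    filter_upwards [self_mem_nhdsWithin] with s hs
    exact (hf.neg_high s hs).le
  have h2 : 0 ≤ f 1 := by
    have ht : Tendsto f (nhdsWithin 1 (Iio 1)) (nhds (f 1)) :=
      ((fcont hf).continuousAt).continuousWithinAt.tendsto
    refine ge_of_tendsto ht ?_
    filter_upwards [Ioo_mem_nhdsLT_of_mem (by constructor <;> [exact hf.alpha_lt; rfl] :
      (1:ℝ) ∈ Ioc α 1)] with s hs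
    exact (hf.pos_mid s hs).le
  linarith

lemma hasDerivAt_G (u : ℝ) : HasDerivAt (Gf f) (-2 * f u) u := by
  exact (hasDerivAt_Fint hf u).sub_const (Fint f 1)

lemma contDiff_G : ContDiff ℝ 2 (Gf f) := by
  have : Gf f = fun u => Fint f u - Fint f 1 := rfl
  rw [this]
  exact (contDiff_Fint hf).sub contDiff_const

lemma cont_G : Continuous (Gf f) := (contDiff_G hf).continuous

lemma G_one : Gf f 1 = 0 := sub_self _

lemma Fint_mono_low : MonotoneOn (Fint f) (Icc 0 α) := by
  apply monotoneOn_of_deriv_nonneg (convex_Icc _ _)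
    ((contDiff_Fint hf).continuous.continuousOn)
    (fun x _ => ((hasDerivAt_Fint hf x).differentiableAt).differentiableWithinAt)
  intro x hx
  rw [interior_Icc] at hx
  rw [(hasDerivAt_Fint hf x).deriv]
  nlinarith [hf.neg_low x hx]

lemma Fint_anti_mid : AntitoneOn (Fint f) (Icc α 1) := by
  apply antitoneOn_of_deriv_nonpos (convex_Icc _ _)
    ((contDiff_Fint hf).continuous.continuousOn)
    (fun x _ => ((hasDerivAt_Fint hf x).differentiableAt).differentiableWithinAt)
  intro x hx
  rw [interior_Icc] at hx
  rw [(hasDerivAt_Fint hf x).deriv]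
  nlinarith [hf.pos_mid x hx]

lemma Fint_zero : Fint f 0 = 0 := by simp [Fint]

lemma G_pos_Ico : ∀ u ∈ Ico (0:ℝ) 1, 0 < Gf f u := by
  intro u hu
  have h1 : Fint f 1 < 0 := Fint_one_neg hf
  rcases le_or_gt u α with h | h
  · have : Fint f 0 ≤ Fint f u := Fint_mono_low hf ⟨le_refl 0, hf.alpha_pos.le⟩ ⟨hu.1, h⟩ hu.1
    rw [Fint_zero hf] at this
    simp only [Gf]; linarith
  · -- u ∈ (α, 1): Fint f u > Fint f 1 since Fint antitone and strict via integral
    have key : Fint f 1 < Fint f u := by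
      have hsplit : ∫ s in (0:ℝ)..1, f s = (∫ s in (0:ℝ)..u, f s) + ∫ s in u..1, f s :=
        (intervalIntegral.integral_add_adjacent_intervals (fint_integrable hf 0 u)
          (fint_integrable hf u 1)).symm
      have hpos : 0 < ∫ s in u..1, f s := by
        apply intervalIntegral.intervalIntegral_pos_of_pos_on (fint_integrable hf u 1)
        · intro x hx
          exact hf.pos_mid x ⟨lt_trans h hx.1, hx.2⟩
        · exact hu.2
      simp only [Fint, hsplit]; nlinarith
    simp only [Gf]; linarith

lemma exists_delta : ∃ δ : ℝ, 0 < δ ∧ δ < 1 ∧ ∀ u ∈ Ioo (-δ) (1:ℝ), 0 < Gf f u := by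
  have h0 : 0 < Gf f 0 := G_pos_Ico hf 0 ⟨le_refl 0, one_pos⟩
  have : ∀ᶠ u in nhds (0:ℝ), 0 < Gf f u :=
    continuousAt_const.eventually_lt (cont_G hf).continuousAt (by simpa using h0)
  rcases Metric.eventually_nhds_iff.mp this with ⟨ε, hε, hball⟩
  refine ⟨min (ε/2) (1/2), by positivity, ?_, ?_⟩
  · exact lt_of_le_of_lt (min_le_right _ _) (by norm_num)
  · intro u hu
    rcases lt_or_ge u 0 with h | h
    · apply hball
      rw [Real.dist_eq, sub_zero, abs_of_neg h]
      have : -u < min (ε/2) (1/2) := by linarith [hu.1]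
      exact lt_of_lt_of_le this (le_trans (min_le_left _ _) (by linarith))
    · exact G_pos_Ico hf u ⟨h, hu.2⟩
end basics

noncomputable def sqG (f : ℝ → ℝ) (u : ℝ) : ℝ := Real.sqrt (Gf f u)
noncomputable def Tf (f : ℝ → ℝ) (u : ℝ) : ℝ := ∫ t in (0:ℝ)..u, (sqG f t)⁻¹

section Tsec
variable {f : ℝ → ℝ} {α θ lam : ℝ} (hf : CondF f α θ lam)
  {δ : ℝ} (hδ : 0 < δ) (hδ1 : δ < 1) (hG : ∀ u ∈ Ioo (-δ) (1:ℝ), 0 < Gf f u)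
include hf hδ hδ1 hG

lemma cont_sqG : Continuous (sqG f) := (cont_G hf).sqrt

lemma sqG_pos : ∀ u ∈ Ioo (-δ) (1:ℝ), 0 < sqG f u := fun u hu => Real.sqrt_pos.mpr (hG u hu)

lemma rho_contAt : ∀ u ∈ Ioo (-δ) (1:ℝ), ContinuousAt (fun t => (sqG f t)⁻¹) u :=
  fun u hu => ((cont_sqG hf hδ hδ1 hG).continuousAt).inv₀ (ne_of_gt (sqG_pos hf hδ hδ1 hG u hu))

lemma rho_contOn : ContinuousOn (fun t => (sqG f t)⁻¹) (Ioo (-δ) (1:ℝ)) :=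
  fun u hu => ((rho_contAt hf hδ hδ1 hG u hu).continuousWithinAt)

lemma zero_mem_D : (0:ℝ) ∈ Ioo (-δ) (1:ℝ) := ⟨by linarith, one_pos⟩

lemma rho_integrable : ∀ a ∈ Ioo (-δ) (1:ℝ), ∀ b ∈ Ioo (-δ) (1:ℝ),
    IntervalIntegrable (fun t => (sqG f t)⁻¹) volume a b := by
  intro a ha b hb
  apply ContinuousOn.intervalIntegrable
  apply (rho_contOn hf hδ hδ1 hG).mono
  intro x hx
  rcases le_total a b with h | h
  · rw [uIcc_of_le h] at hx; exact ⟨lt_of_lt_of_le ha.1 hx.1, lt_of_le_of_lt hx.2 hb.2⟩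
  · rw [uIcc_of_ge h] at hx; exact ⟨lt_of_lt_of_le hb.1 hx.1, lt_of_le_of_lt hx.2 ha.2⟩

lemma hasDerivAt_T : ∀ u ∈ Ioo (-δ) (1:ℝ), HasDerivAt (Tf f) ((sqG f u)⁻¹) u := by
  intro u hu
  exact intervalIntegral.integral_hasDerivAt_right
    (rho_integrable hf hδ hδ1 hG 0 (zero_mem_D hf hδ hδ1 hG) u hu)
    ((((cont_sqG hf hδ hδ1 hG).measurable).inv).stronglyMeasurable.stronglyMeasurableAtFilter)
    (rho_contAt hf hδ hδ1 hG u hu)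

lemma T_contOn : ContinuousOn (Tf f) (Ioo (-δ) (1:ℝ)) :=
  fun u hu => ((hasDerivAt_T hf hδ hδ1 hG u hu).differentiableAt.continuousAt).continuousWithinAt

lemma T_mono : StrictMonoOn (Tf f) (Ioo (-δ) (1:ℝ)) := by
  apply strictMonoOn_of_deriv_pos (convex_Ioo _ _) (T_contOn hf hδ hδ1 hG)
  intro x hx
  rw [interior_Ioo] at hx
  rw [(hasDerivAt_T hf hδ hδ1 hG x hx).deriv]
  exact inv_pos.mpr (sqG_pos hf hδ hδ1 hG x hx)

lemma T_zero : Tf f 0 = 0 := by simp [Tf]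

lemma T_unbounded : ∀ x : ℝ, ∃ u ∈ Ioo θ (1:ℝ), x < Tf f u := by
  have hθD : θ ∈ Ioo (-δ) (1:ℝ) := ⟨by linarith [hf.alpha_pos, hf.theta_gt], hf.theta_lt⟩
  have hderivf : Continuous (deriv f) := hf.smooth.continuous_deriv le_rfl
  obtain ⟨K, hK⟩ := (isCompact_Icc (a := θ) (b := 1)).exists_bound_of_continuousOn
    hderivf.continuousOn
  set K' : ℝ := K + 1 with hK'
  have hK'pos : 0 < K' := by
    have := hK θ ⟨le_refl θ, hf.theta_lt.le⟩
    have : (0:ℝ) ≤ K := le_trans (norm_nonneg _) this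
    linarith
  have hfs : ∀ s ∈ Icc θ (1:ℝ), f s ≤ K' * (1 - s) := by
    intro s hs
    have h1s : (0:ℝ) ≤ 1 - s := by linarith [hs.2]
    have hb : ‖f 1 - f s‖ ≤ K * ‖(1:ℝ) - s‖ :=
      Convex.norm_image_sub_le_of_norm_deriv_le
        (fun x _ => (hf.smooth.differentiable one_ne_zero).differentiableAt)
        hK (convex_Icc _ _) hs ⟨hf.theta_lt.le, le_refl 1⟩
    rw [f_one hf] at hb
    have h2 : |f s| ≤ K * (1 - s) := by
      simpa [abs_of_nonneg h1s] using hb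
    have h3 : f s ≤ |f s| := le_abs_self _
    nlinarith
  have hq : ∀ u : ℝ, HasDerivAt (fun u => K' * (1 - u)^2 - Gf f u)
      (-2 * K' * (1 - u) + 2 * f u) u := by
    intro u
    have h1 := ((((hasDerivAt_id u).const_sub (1:ℝ)).pow 2).const_mul K').sub (hasDerivAt_G hf u)
    refine h1.congr_deriv ?_
    simp; ring
  have hanti : AntitoneOn (fun u => K' * (1 - u)^2 - Gf f u) (Icc θ 1) := by
    apply antitoneOn_of_deriv_nonpos (convex_Icc _ _)
      (fun x _ => (hq x).differentiableAt.continuousAt.continuousWithinAt)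
      (fun x hx => (hq x).differentiableAt.differentiableWithinAt)
    intro x hx
    rw [interior_Icc] at hx
    rw [(hq x).deriv]
    have := hfs x ⟨hx.1.le, hx.2.le⟩
    linarith
  have hGb : ∀ u ∈ Icc θ (1:ℝ), Gf f u ≤ K' * (1 - u)^2 := by
    intro u hu
    have h1 := hanti hu ⟨hf.theta_lt.le, le_refl 1⟩ hu.2
    have h2 : K' * ((1:ℝ) - 1)^2 - Gf f 1 = 0 := by rw [G_one hf]; ring
    simp only [h2] at h1 ⊢
    linarith [h1]
  have hsqK : (0:ℝ) < Real.sqrt K' := Real.sqrt_pos.mpr hK'pos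
  have hsqGb : ∀ t ∈ Ico θ (1:ℝ), sqG f t ≤ Real.sqrt K' * (1 - t) := by
    intro t ht
    have h1t : (0:ℝ) ≤ 1 - t := by linarith [ht.2]
    have := Real.sqrt_le_sqrt (hGb t ⟨ht.1, ht.2.le⟩)
    rwa [show K' * (1-t)^2 = (Real.sqrt K' * (1-t))^2 by
        rw [mul_pow, Real.sq_sqrt hK'pos.le],
      Real.sqrt_sq (by positivity)] at this
  have hrho_lb : ∀ t ∈ Ico θ (1:ℝ), (Real.sqrt K')⁻¹ * (1 - t)⁻¹ ≤ (sqG f t)⁻¹ := by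
    intro t ht
    have htD : t ∈ Ioo (-δ) (1:ℝ) := ⟨by linarith [ht.1, hf.alpha_pos, hf.theta_gt], ht.2⟩
    have hpos := sqG_pos hf hδ hδ1 hG t htD
    rw [← mul_inv]
    exact inv_anti₀ hpos (hsqGb t ht)
  -- key integral lower bound via monotone function
  have hTlb : ∀ u ∈ Ico θ (1:ℝ),
      Tf f θ + (Real.sqrt K')⁻¹ * (Real.log (1 - θ) - Real.log (1 - u)) ≤ Tf f u := by
    intro u hu
    set c := (Real.sqrt K')⁻¹ with hc
    have hmono : MonotoneOn (fun t => Tf f t - c * (-Real.log (1 - t))) (Icc θ u) := by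
      have hD : ∀ t ∈ Icc θ u, t ∈ Ioo (-δ) (1:ℝ) := by
        intro t ht
        constructor
        · linarith [ht.1, hf.alpha_pos, hf.theta_gt]
        · linarith [ht.2, hu.2]
      have hder : ∀ t ∈ Icc θ u, HasDerivAt (fun t => Tf f t - c * (-Real.log (1 - t)))
          ((sqG f t)⁻¹ - c * (1 - t)⁻¹) t := by
        intro t ht
        have h1t : (1:ℝ) - t ≠ 0 := by
          have : t < 1 := lt_of_le_of_lt ht.2 hu.2
          intro h; linarith [this, sub_eq_zero.mp h]
        have hlog : HasDerivAt (fun t : ℝ => -Real.log (1 - t)) ((1 - t)⁻¹) t := by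
          have := ((Real.hasDerivAt_log h1t).comp t ((hasDerivAt_id t).const_sub (1:ℝ))).neg
          refine this.congr_deriv ?_
          ring
        exact (hasDerivAt_T hf hδ hδ1 hG t (hD t ht)).sub (hlog.const_mul c)
      apply monotoneOn_of_deriv_nonneg (convex_Icc _ _)
        (fun t ht => (hder t ht).differentiableAt.continuousAt.continuousWithinAt)
        (fun t ht => (hder t (interior_subset ht)).differentiableAt.differentiableWithinAt)
      intro t ht
      rw [interior_Icc] at ht
      rw [(hder t ⟨ht.1.le, ht.2.le⟩).deriv]
      have := hrho_lb t ⟨ht.1.le, by linarith [ht.2, hu.2]⟩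
      linarith
    have := hmono ⟨le_refl θ, hu.1⟩ ⟨hu.1, le_refl u⟩ hu.1
    simp only at this
    linarith
  intro x
  set c := Real.sqrt K' with hc
  set E : ℝ := Real.exp (-c * (|x - Tf f θ| + 1)) with hE
  have hEpos : 0 < E := Real.exp_pos _
  have hElt : E < 1 := by
    rw [hE, Real.exp_lt_one_iff]
    have : 0 < |x - Tf f θ| + 1 := by positivity
    nlinarith
  set u : ℝ := 1 - (1 - θ) * E with hu
  have h1θ : (0:ℝ) < 1 - θ := by linarith [hf.theta_lt]
  have huI : u ∈ Ioo θ (1:ℝ) := by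
    constructor
    · rw [hu]; nlinarith
    · rw [hu]; nlinarith
  refine ⟨u, huI, ?_⟩
  have h1u : 1 - u = (1 - θ) * E := by rw [hu]; ring
  have hlogu : Real.log (1 - u) = Real.log (1 - θ) + (-c * (|x - Tf f θ| + 1)) := by
    rw [h1u, Real.log_mul (ne_of_gt h1θ) (ne_of_gt hEpos), hE, Real.log_exp]
  have hb := hTlb u ⟨huI.1.le, huI.2⟩
  rw [hlogu] at hb
  have hcinv : c⁻¹ * c = 1 := inv_mul_cancel₀ (ne_of_gt hsqK)
  have : Tf f θ + c⁻¹ * (Real.log (1-θ) - (Real.log (1-θ) + (-c * (|x - Tf f θ| + 1))))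
      = Tf f θ + |x - Tf f θ| + 1 := by
    field_simp
    ring
  rw [this] at hb
  have habs : x - Tf f θ ≤ |x - Tf f θ| := le_abs_self _
  linarith
end Tsec

open Classical in
noncomputable def vf (f : ℝ → ℝ) (δ : ℝ) : ℝ → ℝ := fun x =>
  if h : ∃ u, u ∈ Ioo (-δ) (1:ℝ) ∧ Tf f u = x then h.choose else 0

section vsec
variable {f : ℝ → ℝ} {α θ lam : ℝ} (hf : CondF f α θ lam)
  {δ : ℝ} (hδ : 0 < δ) (hδ1 : δ < 1) (hG : ∀ u ∈ Ioo (-δ) (1:ℝ), 0 < Gf f u)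
include hf hδ hδ1 hG

lemma v_spec : ∀ u ∈ Ioo (-δ) (1:ℝ), vf f δ (Tf f u) = u := by
  intro u hu
  have hex : ∃ u', u' ∈ Ioo (-δ) (1:ℝ) ∧ Tf f u' = Tf f u := ⟨u, hu, rfl⟩
  rw [vf, dif_pos hex]
  exact (T_mono hf hδ hδ1 hG).injOn hex.choose_spec.1 hu hex.choose_spec.2

lemma T_surj : ∀ x : ℝ, Tf f (-δ/2) ≤ x → ∃ u ∈ Ioo (-δ) (1:ℝ), Tf f u = x := by
  intro x hx
  have haD : (-δ/2) ∈ Ioo (-δ) (1:ℝ) := ⟨by linarith, by linarith⟩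
  obtain ⟨u₁, hu₁, hTu₁⟩ := T_unbounded hf hδ hδ1 hG x
  have hθpos : (0:ℝ) < θ := lt_trans hf.alpha_pos hf.theta_gt
  have hle : (-δ/2) ≤ u₁ := by linarith [hu₁.1]
  have hsub : Icc (-δ/2) u₁ ⊆ Ioo (-δ) (1:ℝ) := fun t ht =>
    ⟨by linarith [ht.1], lt_of_le_of_lt ht.2 hu₁.2⟩
  have himg := intermediate_value_Icc hle ((T_contOn hf hδ hδ1 hG).mono hsub)
  obtain ⟨u, huI, huT⟩ := himg ⟨hx, hTu₁.le⟩
  exact ⟨u, hsub huI, huT⟩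

lemma v_mem : ∀ x : ℝ, Tf f (-δ/2) ≤ x →
    vf f δ x ∈ Ioo (-δ) (1:ℝ) ∧ Tf f (vf f δ x) = x := by
  intro x hx
  obtain ⟨u, hu, hT⟩ := T_surj hf hδ hδ1 hG x hx
  rw [← hT, v_spec hf hδ hδ1 hG u hu]
  exact ⟨hu, rfl⟩

lemma Ta_neg : Tf f (-δ/2) < 0 := by
  have haD : (-δ/2) ∈ Ioo (-δ) (1:ℝ) := ⟨by linarith, by linarith⟩
  have := T_mono hf hδ hδ1 hG haD (zero_mem_D hf hδ hδ1 hG) (by linarith)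
  rwa [T_zero hf hδ hδ1 hG] at this

lemma v_zero : vf f δ 0 = 0 := by
  have := v_spec hf hδ hδ1 hG 0 (zero_mem_D hf hδ hδ1 hG)
  rwa [T_zero hf hδ hδ1 hG] at this

lemma v_contAt : ∀ x : ℝ, Tf f (-δ/2) < x → ContinuousAt (vf f δ) x := by
  intro x hx
  rw [Metric.continuousAt_iff]
  intro ε hε
  obtain ⟨hvD, hvT⟩ := v_mem hf hδ hδ1 hG x hx.le
  set u0 := vf f δ x with hu0
  set ε' := min (ε/2) (min ((u0 + δ)/2) ((1 - u0)/2)) with hε'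
  have h1 : (0:ℝ) < (u0 + δ)/2 := by linarith [hvD.1]
  have h2 : (0:ℝ) < (1 - u0)/2 := by linarith [hvD.2]
  have hε'pos : 0 < ε' := lt_min (by linarith) (lt_min h1 h2)
  have hε'le1 : ε' ≤ (u0 + δ)/2 := le_trans (min_le_right _ _) (min_le_left _ _)
  have hε'le2 : ε' ≤ (1 - u0)/2 := le_trans (min_le_right _ _) (min_le_right _ _)
  have hmD : Icc (u0 - ε') (u0 + ε') ⊆ Ioo (-δ) (1:ℝ) := by
    intro t ht
    constructor
    · have : u0 - ε' ≥ (u0 - δ)/2 := by linarith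
      linarith [ht.1, hvD.1]
    · have : u0 + ε' ≤ (1 + u0)/2 := by linarith
      linarith [ht.2, hvD.2]
  have hm1 : u0 - ε' ∈ Ioo (-δ) (1:ℝ) := hmD ⟨le_refl _, by linarith⟩
  have hm2 : u0 + ε' ∈ Ioo (-δ) (1:ℝ) := hmD ⟨by linarith, le_refl _⟩
  have hx1 : Tf f (u0 - ε') < x := by
    rw [← hvT]
    exact T_mono hf hδ hδ1 hG hm1 hvD (by linarith)
  have hx2 : x < Tf f (u0 + ε') := by
    rw [← hvT]
    exact T_mono hf hδ hδ1 hG hvD hm2 (by linarith)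
  refine ⟨min (x - Tf f (u0 - ε')) (Tf f (u0 + ε') - x), lt_min (by linarith) (by linarith), ?_⟩
  intro y hy
  rw [Real.dist_eq] at hy
  have hy' := abs_lt.mp hy
  have hy1 : Tf f (u0 - ε') < y := by
    have hA := min_le_left (x - Tf f (u0 - ε')) (Tf f (u0 + ε') - x)
    linarith [hy'.1]
  have hy2 : y < Tf f (u0 + ε') := by
    linarith [hy'.2, min_le_right (x - Tf f (u0 - ε')) (Tf f (u0 + ε') - x)]
  obtain ⟨u₂, hu₂I, hu₂T⟩ := intermediate_value_Icc (by linarith : u0 - ε' ≤ u0 + ε')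
    ((T_contOn hf hδ hδ1 hG).mono hmD) ⟨hy1.le, hy2.le⟩
  have : vf f δ y = u₂ := by rw [← hu₂T]; exact v_spec hf hδ hδ1 hG u₂ (hmD hu₂I)
  rw [Real.dist_eq, this]
  have : |u₂ - u0| ≤ ε' := abs_le.mpr ⟨by linarith [hu₂I.1], by linarith [hu₂I.2]⟩
  linarith [this, hε'pos, min_le_left (ε/2) (min ((u0 + δ)/2) ((1 - u0)/2))]

lemma v_hasDeriv : ∀ x : ℝ, Tf f (-δ/2) < x →
    HasDerivAt (vf f δ) (sqG f (vf f δ x)) x := by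
  intro x hx
  obtain ⟨hvD, hvT⟩ := v_mem hf hδ hδ1 hG x hx.le
  have h := HasDerivAt.of_local_left_inverse (v_contAt hf hδ hδ1 hG x hx)
    (hasDerivAt_T hf hδ hδ1 hG _ hvD)
    (ne_of_gt (inv_pos.mpr (sqG_pos hf hδ hδ1 hG _ hvD)))
    ?_
  · rwa [inv_inv] at h
  · filter_upwards [Ioi_mem_nhds hx] with y hy
    exact (v_mem hf hδ hδ1 hG y (le_of_lt hy)).2

end vsec

section vsec2
variable {f : ℝ → ℝ} {α θ lam : ℝ} (hf : CondF f α θ lam)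
  {δ : ℝ} (hδ : 0 < δ) (hδ1 : δ < 1) (hG : ∀ u ∈ Ioo (-δ) (1:ℝ), 0 < Gf f u)
include hf hδ hδ1 hG

lemma v_deriv_eq : ∀ x : ℝ, Tf f (-δ/2) < x → deriv (vf f δ) x = sqG f (vf f δ x) :=
  fun x hx => (v_hasDeriv hf hδ hδ1 hG x hx).deriv

lemma v_deriv_eventually : ∀ x : ℝ, Tf f (-δ/2) < x →
    deriv (vf f δ) =ᶠ[nhds x] fun y => sqG f (vf f δ y) := by
  intro x hx
  filter_upwards [Ioi_mem_nhds hx] with y hy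
  exact v_deriv_eq hf hδ hδ1 hG y hy

lemma v_hasDeriv2 : ∀ x : ℝ, Tf f (-δ/2) < x →
    HasDerivAt (deriv (vf f δ)) (-f (vf f δ x)) x := by
  intro x hx
  have hvD := (v_mem hf hδ hδ1 hG x hx.le).1
  have hGv : 0 < Gf f (vf f δ x) := hG _ hvD
  have hsqne : sqG f (vf f δ x) ≠ 0 := ne_of_gt (sqG_pos hf hδ hδ1 hG _ hvD)
  have hv := v_hasDeriv hf hδ hδ1 hG x hx
  have hchain : HasDerivAt (fun y => sqG f (vf f δ y))
      (1 / (2 * Real.sqrt (Gf f (vf f δ x))) * (-2 * f (vf f δ x) * sqG f (vf f δ x))) x := by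
    have hGc : HasDerivAt (fun y => Gf f (vf f δ y)) (-2 * f (vf f δ x) * sqG f (vf f δ x)) x :=
      (hasDerivAt_G hf (vf f δ x)).comp x hv
    exact (Real.hasDerivAt_sqrt (ne_of_gt hGv)).comp x hGc
  have heq := (v_deriv_eventually hf hδ hδ1 hG x hx).symm
  have h2 := hchain.congr_of_eventuallyEq heq.symm
  refine h2.congr_deriv ?_
  have : Real.sqrt (Gf f (vf f δ x)) = sqG f (vf f δ x) := rfl
  rw [this]
  field_simp

lemma v_contDiffOn_one : ContDiffOn ℝ 1 (vf f δ) (Ioi (Tf f (-δ/2))) := by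
  rw [show (1 : WithTop ℕ∞) = 0 + 1 from by norm_num,
    contDiffOn_succ_iff_deriv_of_isOpen isOpen_Ioi]
  refine ⟨fun x hx => (v_hasDeriv hf hδ hδ1 hG x hx).differentiableAt.differentiableWithinAt,
    by simp, ?_⟩
  rw [contDiffOn_zero]
  intro x hx
  apply ContinuousAt.continuousWithinAt
  apply ContinuousAt.congr_of_eventuallyEq ?_ (v_deriv_eventually hf hδ hδ1 hG x hx)
  exact (cont_sqG hf hδ hδ1 hG).continuousAt.comp (v_contAt hf hδ hδ1 hG x hx)

lemma v_contDiffOn : ContDiffOn ℝ 2 (vf f δ) (Ioi (Tf f (-δ/2))) := by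
  rw [show (2 : WithTop ℕ∞) = 1 + 1 from by norm_num,
    contDiffOn_succ_iff_deriv_of_isOpen isOpen_Ioi]
  refine ⟨fun x hx => (v_hasDeriv hf hδ hδ1 hG x hx).differentiableAt.differentiableWithinAt,
    by simp, ?_⟩
  intro x hx
  apply ContDiffWithinAt.congr_of_eventuallyEq_of_mem
    ?_ (((v_deriv_eventually hf hδ hδ1 hG x hx)).filter_mono (nhdsWithin_le_nhds)) hx
  apply ContDiffAt.contDiffWithinAt
  have hvD := (v_mem hf hδ hδ1 hG x hx.le).1
  have hGv : 0 < Gf f (vf f δ x) := hG _ hvD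
  have hvC1 : ContDiffAt ℝ 1 (vf f δ) x :=
    (v_contDiffOn_one hf hδ hδ1 hG).contDiffAt (isOpen_Ioi.mem_nhds hx)
  have hGC1 : ContDiffAt ℝ 1 (Gf f) (vf f δ x) :=
    (contDiff_G hf).contDiffAt.of_le (by norm_num)
  have hsqrtC : ContDiffAt ℝ 1 Real.sqrt (Gf f (vf f δ x)) :=
    Real.contDiffAt_sqrt (ne_of_gt hGv)
  exact (hsqrtC.comp _ hGC1).comp x hvC1

lemma v_lt_compare : ∀ u ∈ Ioo (-δ) (1:ℝ), ∀ x : ℝ, Tf f (-δ/2) < x → Tf f u < x →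
    u < vf f δ x := by
  intro u hu x hxa hx
  obtain ⟨hvD, hvT⟩ := v_mem hf hδ hδ1 hG x hxa.le
  by_contra h
  push_neg at h
  have := (T_mono hf hδ hδ1 hG).monotoneOn hvD hu h
  rw [hvT] at this
  linarith

lemma v_tendsto : Tendsto (vf f δ) atTop (nhds 1) := by
  rw [tendsto_order]
  constructor
  · intro u hu
    have hu' : max u 0 ∈ Ioo (-δ) (1:ℝ) := ⟨lt_of_lt_of_le (by linarith : -δ < (0:ℝ)) (le_max_right u 0), max_lt hu one_pos⟩
    filter_upwards [eventually_gt_atTop (max (Tf f (max u 0)) 0)] with x hx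
    have hxa : Tf f (-δ/2) < x :=
      lt_of_lt_of_le (Ta_neg hf hδ hδ1 hG) (le_trans (le_max_right _ _) hx.le)
    have hTu : Tf f (max u 0) < x := lt_of_le_of_lt (le_max_left _ _) hx
    exact lt_of_le_of_lt (le_max_left u 0) (v_lt_compare hf hδ hδ1 hG _ hu' x hxa hTu)
  · intro u hu
    filter_upwards [eventually_gt_atTop (Tf f (-δ/2))] with x hx
    exact lt_trans (v_mem hf hδ hδ1 hG x hx.le).1.2 hu

lemma v_energy : ∀ x : ℝ, Tf f (-δ/2) < x →
    (deriv (vf f δ) x)^2 = Fint f (vf f δ x) - Fint f 1 := by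
  intro x hx
  have hvD := (v_mem hf hδ hδ1 hG x hx.le).1
  rw [v_deriv_eq hf hδ hδ1 hG x hx]
  have : (sqG f (vf f δ x))^2 = Gf f (vf f δ x) := Real.sq_sqrt (hG _ hvD).le
  rw [this]
  rfl

end vsec2

section uniq
variable {f : ℝ → ℝ} {α θ lam : ℝ} (hf : CondF f α θ lam)
  {δ : ℝ} (hδ : 0 < δ) (hδ1 : δ < 1) (hG : ∀ u ∈ Ioo (-δ) (1:ℝ), 0 < Gf f u)
  {w : ℝ → ℝ} (hw1 : ContDiffOn ℝ 2 w (Ici 0))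
  (hw2 : ∀ x ≥ (0:ℝ), deriv (deriv w) x + f (w x) = 0)
  (hw3 : w 0 = 0) (hw4 : ∀ x ≥ (0:ℝ), 0 < deriv w x)
  (hw5 : Tendsto w atTop (nhds 1))
include hf hδ hδ1 hG hw1 hw2 hw3 hw4 hw5

lemma w_eq_v : ∀ x ≥ (0:ℝ), w x = vf f δ x := by
  have hwc : ContinuousOn w (Ici 0) := hw1.continuousOn
  have hwmono : StrictMonoOn w (Ici 0) := by
    apply strictMonoOn_of_deriv_pos (convex_Ici 0) hwc
    intro x hx
    rw [interior_Ici] at hx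
    exact hw4 x hx.le
  have hwle1 : ∀ x ≥ (0:ℝ), w x ≤ 1 := by
    intro x hx
    refine ge_of_tendsto hw5 ?_
    filter_upwards [eventually_ge_atTop x] with y hy
    exact hwmono.monotoneOn (mem_Ici.mpr hx) (mem_Ici.mpr (le_trans hx hy)) hy
  have hwlt1 : ∀ x ≥ (0:ℝ), w x < 1 := by
    intro x hx
    have h1 : w x < w (x + 1) := hwmono (mem_Ici.mpr hx) (mem_Ici.mpr (by linarith)) (by linarith)
    exact lt_of_lt_of_le h1 (hwle1 (x+1) (by linarith))
  have hwpos : ∀ x > (0:ℝ), 0 < w x := by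
    intro x hx
    have := hwmono (mem_Ici.mpr (le_refl 0)) (mem_Ici.mpr hx.le) hx
    rwa [hw3] at this
  have hwO : ContDiffOn ℝ 2 w (Ioi 0) := hw1.mono Ioi_subset_Ici_self
  have hwd1 : ∀ x ∈ Ioi (0:ℝ), HasDerivAt w (deriv w x) x := by
    intro x hx
    exact (((hwO.contDiffAt (isOpen_Ioi.mem_nhds hx)).differentiableAt
      (by norm_num)).hasDerivAt)
  have hwC1d : ContDiffOn ℝ 1 (deriv w) (Ioi 0) := by
    have := (contDiffOn_succ_iff_deriv_of_isOpen (isOpen_Ioi (a := (0:ℝ)))).mp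
      (by rw [show ((1:WithTop ℕ∞)) + 1 = 2 from by norm_num]; exact hwO)
    exact this.2.2
  have hwd2 : ∀ x ∈ Ioi (0:ℝ), HasDerivAt (deriv w) (deriv (deriv w) x) x := by
    intro x hx
    exact ((hwC1d.contDiffAt (isOpen_Ioi.mem_nhds hx)).differentiableAt one_ne_zero).hasDerivAt
  set E : ℝ → ℝ := fun x => (deriv w x)^2 - Gf f (w x) with hE
  have hEd : ∀ x ∈ Ioi (0:ℝ), HasDerivAt E 0 x := by
    intro x hx
    have hode : deriv (deriv w) x = - f (w x) := by linarith [hw2 x hx.le]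
    have h1 : HasDerivAt (fun y => (deriv w y)^2)
        (2 * deriv w x ^ 1 * deriv (deriv w) x) x := (hwd2 x hx).pow 2
    have h2 : HasDerivAt (fun y => Gf f (w y)) (-2 * f (w x) * deriv w x) x :=
      (hasDerivAt_G hf (w x)).comp x (hwd1 x hx)
    have := h1.sub h2
    refine this.congr_deriv ?_
    rw [hode]; ring
  have hEconst : ∀ x ∈ Ioi (0:ℝ), E x = E 1 := by
    have hc : ContinuousOn E (Ioi 0) :=
      fun x hx => (hEd x hx).differentiableAt.continuousAt.continuousWithinAt
    have hd : DifferentiableOn ℝ E (interior (Ioi 0)) := by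
      rw [interior_Ioi]
      exact fun x hx => (hEd x hx).differentiableAt.differentiableWithinAt
    have hm := monotoneOn_of_deriv_nonneg (convex_Ioi 0) hc hd (fun x hx => by
      rw [interior_Ioi] at hx; rw [(hEd x hx).deriv])
    have ha := antitoneOn_of_deriv_nonpos (convex_Ioi 0) hc hd (fun x hx => by
      rw [interior_Ioi] at hx; rw [(hEd x hx).deriv])
    intro x hx
    have h1 : (1:ℝ) ∈ Ioi (0:ℝ) := by norm_num
    rcases le_total x 1 with h | h
    · exact le_antisymm (hm hx h1 h) (ha hx h1 h)
    · exact le_antisymm (ha h1 hx h) (hm h1 hx h)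
  set c : ℝ := E 1 with hc
  have hGw0 : Tendsto (fun x => Gf f (w x)) atTop (nhds 0) := by
    have := ((cont_G hf).continuousAt (x := 1)).tendsto.comp hw5
    rwa [G_one hf] at this
  have hsq : Tendsto (fun x => (deriv w x)^2) atTop (nhds c) := by
    have h1 : Tendsto (fun x => c + Gf f (w x)) atTop (nhds (c + 0)) :=
      tendsto_const_nhds.add hGw0
    rw [add_zero] at h1
    apply h1.congr'
    filter_upwards [eventually_gt_atTop 0] with x hx
    have := hEconst x hx
    simp only [hE] at this
    linarith
  have hc0 : 0 ≤ c := ge_of_tendsto hsq (by filter_upwards with x; positivity)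
  have hceq : c = 0 := by
    by_contra hne
    have hcpos : 0 < c := lt_of_le_of_ne hc0 (Ne.symm hne)
    have hscpos : 0 < Real.sqrt c := Real.sqrt_pos.mpr hcpos
    have hdw : Tendsto (deriv w) atTop (nhds (Real.sqrt c)) := by
      have h1 := (Real.continuous_sqrt.continuousAt (x := c)).tendsto.comp hsq
      apply h1.congr'
      filter_upwards [eventually_gt_atTop 0] with x hx
      exact Real.sqrt_sq (hw4 x hx.le).le
    have hev : ∀ᶠ x in atTop, Real.sqrt c / 2 < deriv w x :=
      hdw.eventually_const_lt (by linarith)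
    obtain ⟨X, hX⟩ := (hev.and (eventually_ge_atTop (1:ℝ))).exists_forall_of_atTop
    have hX1 : (1:ℝ) ≤ X := (hX X le_rfl).2
    have hmono : MonotoneOn (fun x => w x - Real.sqrt c / 2 * x) (Ici X) := by
      apply monotoneOn_of_deriv_nonneg (convex_Ici X)
      · intro x hx
        exact ((hwd1 x (by simp only [mem_Ioi]; linarith [mem_Ici.mp hx])).sub
          ((hasDerivAt_id' (x := x)).const_mul (Real.sqrt c / 2))).differentiableAt.continuousAt.continuousWithinAt
      · intro x hx
        rw [interior_Ici] at hx
        exact ((hwd1 x (by simp only [mem_Ioi]; linarith [mem_Ioi.mp hx])).sub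
          ((hasDerivAt_id' (x := x)).const_mul (Real.sqrt c / 2))).differentiableAt.differentiableWithinAt
      · intro x hx
        rw [interior_Ici] at hx
        have hd := ((hwd1 x (by simp only [mem_Ioi]; linarith [mem_Ioi.mp hx])).sub
          ((hasDerivAt_id' (x := x)).const_mul (Real.sqrt c / 2))).deriv
        rw [show deriv (fun x => w x - Real.sqrt c / 2 * x) x = _ from hd]
        simp only [id_eq, mul_one]
        linarith [(hX x (le_of_lt hx)).1]
    set Y : ℝ := X + (2 / Real.sqrt c) * (2 - w X) with hY
    have hwX1 : w X < 1 := hwlt1 X (by linarith)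
    have hYX : X ≤ Y := by
      rw [hY]
      have h2w : 0 < 2 - w X := by linarith
      have : 0 < (2 / Real.sqrt c) * (2 - w X) := by positivity
      linarith
    have := hmono (mem_Ici.mpr (le_refl X)) (mem_Ici.mpr hYX) hYX
    simp only at this
    have hYcalc : Real.sqrt c / 2 * Y - Real.sqrt c / 2 * X = 2 - w X := by
      rw [hY]
      field_simp
      ring
    have hwY : 2 ≤ w Y := by linarith
    linarith [hwle1 Y (by linarith)]
  have hEzero : ∀ x > (0:ℝ), (deriv w x)^2 = Gf f (w x) := by
    intro x hx
    have := hEconst x hx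
    rw [hceq] at this
    simp only [hE] at this
    linarith
  have hwD : ∀ x > (0:ℝ), w x ∈ Ioo (-δ) (1:ℝ) := fun x hx =>
    ⟨by linarith [hwpos x hx], hwlt1 x hx.le⟩
  have hdweq : ∀ x > (0:ℝ), deriv w x = sqG f (w x) := by
    intro x hx
    have h1 : deriv w x = Real.sqrt ((deriv w x)^2) := (Real.sqrt_sq (hw4 x hx.le).le).symm
    rw [h1, hEzero x hx]
    rfl
  set Φ : ℝ → ℝ := fun x => Tf f (w x) - x with hΦ
  have hΦd : ∀ x ∈ Ioi (0:ℝ), HasDerivAt Φ 0 x := by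
    intro x hx
    have h1 : HasDerivAt (fun y => Tf f (w y)) ((sqG f (w x))⁻¹ * deriv w x) x :=
      (hasDerivAt_T hf hδ hδ1 hG _ (hwD x hx)).comp x (hwd1 x hx)
    have h2 := h1.sub (hasDerivAt_id x)
    refine h2.congr_deriv ?_
    rw [hdweq x hx, inv_mul_cancel₀ (ne_of_gt (sqG_pos hf hδ hδ1 hG _ (hwD x hx)))]
    simp
  have hΦconst : ∀ x ∈ Ioi (0:ℝ), Φ x = Φ 1 := by
    have hc' : ContinuousOn Φ (Ioi 0) :=
      fun x hx => (hΦd x hx).differentiableAt.continuousAt.continuousWithinAt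
    have hd : DifferentiableOn ℝ Φ (interior (Ioi 0)) := by
      rw [interior_Ioi]
      exact fun x hx => (hΦd x hx).differentiableAt.differentiableWithinAt
    have hm := monotoneOn_of_deriv_nonneg (convex_Ioi 0) hc' hd (fun x hx => by
      rw [interior_Ioi] at hx; rw [(hΦd x hx).deriv])
    have ha := antitoneOn_of_deriv_nonpos (convex_Ioi 0) hc' hd (fun x hx => by
      rw [interior_Ioi] at hx; rw [(hΦd x hx).deriv])
    intro x hx
    have h1 : (1:ℝ) ∈ Ioi (0:ℝ) := by norm_num
    rcases le_total x 1 with h | h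
    · exact le_antisymm (hm hx h1 h) (ha hx h1 h)
    · exact le_antisymm (ha h1 hx h) (hm h1 hx h)
  have hΦlim : Tendsto Φ (nhdsWithin 0 (Ioi 0)) (nhds 0) := by
    have hwt : Tendsto w (nhdsWithin 0 (Ioi 0)) (nhds 0) := by
      have := (hwc 0 (mem_Ici.mpr (le_refl 0))).tendsto
      rw [hw3] at this
      exact this.mono_left (nhdsWithin_mono 0 Ioi_subset_Ici_self)
    have hTt : Tendsto (fun x => Tf f (w x)) (nhdsWithin 0 (Ioi 0)) (nhds 0) := by
      have hTc : ContinuousAt (Tf f) 0 :=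
        (hasDerivAt_T hf hδ hδ1 hG 0 (zero_mem_D hf hδ hδ1 hG)).differentiableAt.continuousAt
      have := hTc.tendsto.comp hwt
      rwa [T_zero hf hδ hδ1 hG] at this
    have : Tendsto (fun x : ℝ => x) (nhdsWithin 0 (Ioi 0)) (nhds 0) :=
      tendsto_id.mono_left nhdsWithin_le_nhds
    simpa using hTt.sub this
  have hΦ1 : Φ 1 = 0 := by
    have h1 : Tendsto Φ (nhdsWithin 0 (Ioi 0)) (nhds (Φ 1)) := by
      apply Tendsto.congr' ?_ (tendsto_const_nhds (α := ℝ) (f := nhdsWithin 0 (Ioi (0:ℝ))))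
      filter_upwards [self_mem_nhdsWithin] with x hx
      exact (hΦconst x hx).symm
    exact (tendsto_nhds_unique h1 hΦlim)
  intro x hx
  rcases eq_or_lt_of_le hx with h | h
  · rw [← h, hw3, v_zero hf hδ hδ1 hG]
  · have hTw : Tf f (w x) = x := by
      have := hΦconst x h
      rw [hΦ1] at this
      simp only [hΦ] at this
      linarith
    have hxa : Tf f (-δ/2) < x := lt_trans (Ta_neg hf hδ hδ1 hG) h
    obtain ⟨hvD, hvT⟩ := v_mem hf hδ hδ1 hG x hxa.le
    exact (T_mono hf hδ hδ1 hG).injOn (hwD x h) hvD (by rw [hTw, hvT])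

end uniq

def Zground (b : ℝ) (V : ℝ → ℝ) : Set ℝ := {z | V (-z) = b * deriv V (-z)}

def Zactive (b : ℝ) (v : ℝ → ℝ) : Set ℝ := {z | z ≤ 0 ∧ v (-z) = b * deriv v (-z)}

section zsec
variable {f : ℝ → ℝ} {α θ lam : ℝ} (hf : CondF f α θ lam)
  {δ : ℝ} (hδ : 0 < δ) (hδ1 : δ < 1) (hG : ∀ u ∈ Ioo (-δ) (1:ℝ), 0 < Gf f u)
include hf hδ hδ1 hG

lemma zactive_nonempty : ∀ b ≥ (0:ℝ), (Zactive b (vf f δ)).Nonempty := by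
  intro b hb
  rcases eq_or_lt_of_le hb with h | h
  · refine ⟨0, le_refl 0, ?_⟩
    rw [neg_zero, v_zero hf hδ hδ1 hG, ← h, zero_mul]
  · set g : ℝ → ℝ := fun x => vf f δ x - b * deriv (vf f δ) x with hg
    have hgc : ∀ x ≥ (0:ℝ), ContinuousAt g x := by
      intro x hx
      have hxa : Tf f (-δ/2) < x := lt_of_lt_of_le (Ta_neg hf hδ hδ1 hG) hx
      exact ((v_hasDeriv hf hδ hδ1 hG x hxa).differentiableAt.continuousAt).sub
        (((v_hasDeriv2 hf hδ hδ1 hG x hxa).differentiableAt.continuousAt).const_mul b)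
    have hg0 : g 0 < 0 := by
      have hxa : Tf f (-δ/2) < 0 := Ta_neg hf hδ hδ1 hG
      have hd0 : 0 < deriv (vf f δ) 0 := by
        rw [v_deriv_eq hf hδ hδ1 hG 0 hxa]
        exact sqG_pos hf hδ hδ1 hG _ (v_mem hf hδ hδ1 hG 0 hxa.le).1
      rw [hg]
      simp only [v_zero hf hδ hδ1 hG]
      nlinarith
    have hglim : Tendsto g atTop (nhds 1) := by
      have hdv : Tendsto (fun x => deriv (vf f δ) x) atTop (nhds 0) := by
        have h1 : Tendsto (fun x => sqG f (vf f δ x)) atTop (nhds (sqG f 1)) :=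
          ((cont_sqG hf hδ hδ1 hG).continuousAt).tendsto.comp (v_tendsto hf hδ hδ1 hG)
        have h2 : sqG f 1 = 0 := by
          have : sqG f 1 = Real.sqrt (Gf f 1) := rfl
          rw [this, G_one hf, Real.sqrt_zero]
        rw [h2] at h1
        apply h1.congr'
        filter_upwards [eventually_gt_atTop (Tf f (-δ/2))] with x hx
        exact (v_deriv_eq hf hδ hδ1 hG x hx).symm
      have := (v_tendsto hf hδ hδ1 hG).sub (hdv.const_mul b)
      simpa using this
    obtain ⟨X, hX⟩ := ((hglim.eventually_const_lt (by norm_num : (1:ℝ)/2 < 1)).and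
      (eventually_ge_atTop (0:ℝ))).exists_forall_of_atTop
    have hX0 : (0:ℝ) ≤ X := (hX X le_rfl).2
    have h12 : 1/2 < g X := (hX X le_rfl).1
    have hgX : 0 ≤ g X := le_trans (by norm_num : (0:ℝ) ≤ 1/2) h12.le
    obtain ⟨x, hxI, hgx⟩ := intermediate_value_Icc hX0
      (fun x hx => (hgc x hx.1).continuousWithinAt) (⟨hg0.le, hgX⟩ : (0:ℝ) ∈ Icc (g 0) (g X))
    refine ⟨-x, by linarith [hxI.1], ?_⟩
    rw [neg_neg]
    have : vf f δ x - b * deriv (vf f δ) x = 0 := hgx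
    linarith
end zsec

theorem stmt4 (f : ℝ → ℝ) (α θ lam : ℝ) (hf : CondF f α θ lam) :
    ∃ v : ℝ → ℝ,
      (ContDiffOn ℝ 2 v (Set.Ici 0) ∧ (∀ x ≥ (0:ℝ), deriv (deriv v) x + f (v x) = 0) ∧
        v 0 = 0 ∧ (∀ x ≥ (0:ℝ), 0 < deriv v x) ∧
        Filter.Tendsto v Filter.atTop (nhds 1)) ∧
      (∀ w : ℝ → ℝ,
        (ContDiffOn ℝ 2 w (Set.Ici 0) ∧ (∀ x ≥ (0:ℝ), deriv (deriv w) x + f (w x) = 0) ∧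
          w 0 = 0 ∧ (∀ x ≥ (0:ℝ), 0 < deriv w x) ∧
          Filter.Tendsto w Filter.atTop (nhds 1)) →
        ∀ x ≥ (0:ℝ), w x = v x) ∧
      Fint f 1 < 0 ∧
      (∀ x ≥ (0:ℝ), (deriv v x) ^ 2 = Fint f (v x) - Fint f 1) ∧
      (∀ b ≥ (0:ℝ), (Zactive b v).Nonempty) := by
  obtain ⟨δ, hδ, hδ1, hG⟩ := exists_delta hf
  have hIci : ∀ x : ℝ, 0 ≤ x → Tf f (-δ/2) < x :=
    fun x hx => lt_of_lt_of_le (Ta_neg hf hδ hδ1 hG) hx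
  refine ⟨vf f δ, ⟨?_, ?_, v_zero hf hδ hδ1 hG, ?_, v_tendsto hf hδ hδ1 hG⟩, ?_, ?_, ?_, ?_⟩
  · exact (v_contDiffOn hf hδ hδ1 hG).mono (fun x hx => hIci x hx)
  · intro x hx
    rw [(v_hasDeriv2 hf hδ hδ1 hG x (hIci x hx)).deriv]
    ring
  · intro x hx
    rw [v_deriv_eq hf hδ hδ1 hG x (hIci x hx)]
    exact sqG_pos hf hδ hδ1 hG _ (v_mem hf hδ hδ1 hG x (hIci x hx).le).1
  · rintro w ⟨hw1, hw2, hw3, hw4, hw5⟩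
    exact w_eq_v hf hδ hδ1 hG hw1 hw2 hw3 hw4 hw5
  · exact Fint_one_neg hf
  · intro x hx
    exact v_energy hf hδ hδ1 hG x (hIci x hx)
  · exact zactive_nonempty hf hδ hδ1 hG
end
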